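/- Fix a nonnegative integer n. Call a signed Young diagram orthogonal-III of signature (n,n) if it has signature (n,n), m(ℓ,+) = m(ℓ,−) for every odd ℓ, and m(ℓ,+) and m(ℓ,−) are both even for every even ℓ. For such λ let α(λ) be the partition in which each odd ℓ occurs with multiplicity ⌊m_λ(ℓ,+)/2⌋ and each even ℓ occurs with multiplicity min(m_λ(ℓ,+), m_λ(ℓ,−))/2, let k(λ) = |α(λ)|, and let μ(λ) have multiplicities m_λ(ℓ,ε) − 2·(multiplicity of ℓ in α(λ)). Then λ ↦ (α(λ), μ(λ)) is a bijection from the set of orthogonal-III diagrams of signature (n,n) onto the set of pairs (α, μ) in which α is a partition of some k ≥ 0 and μ is an orthogonal-III diagram of signature (n−2k, n−2k) satisfying: m_μ(ℓ,+) = m_μ(ℓ,−) ≤ 1 for every odd ℓ, and min(m_μ(ℓ,+), m_μ(ℓ,−)) = 0 for every even ℓ. -/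

import Mathlib

/-!
Statement 15: the bijection λ ↦ (α(λ), μ(λ)) from orthogonal-III signed Young diagrams
of signature (n,n) onto pairs of a partition α and a reduced orthogonal-III diagram μ
of signature (n−2|α|, n−2|α|).
-/

open scoped Classical

namespace Stmt15

/-- The number of `+` boxes in a row of length `ℓ` whose leftmost box has sign `b`. -/
def rowPlus (ℓ : ℕ) (b : Bool) : ℕ := if b then (ℓ + 1) / 2 else ℓ / 2

def sigPlus (m : (ℕ × Bool) →₀ ℕ) : ℕ := m.sum fun p k => k * rowPlus p.1 p.2

def sigMinus (m : (ℕ × Bool) →₀ ℕ) : ℕ := m.sum fun p k => k * rowPlus p.1 (!p.2)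

/-- The size of a partition: the sum of the parts counted with multiplicity. -/
def psize (α : ℕ →₀ ℕ) : ℕ := α.sum fun ℓ k => ℓ * k

/-- The multiplicity of `ℓ` in `α(λ)`: `⌊m_λ(ℓ,+)/2⌋` for odd `ℓ` and
`min (m_λ(ℓ,+)) (m_λ(ℓ,−)) / 2` for even `ℓ`. -/
noncomputable def alphaVal (m : (ℕ × Bool) →₀ ℕ) (ℓ : ℕ) : ℕ :=
  if Odd ℓ then m (ℓ, true) / 2 else min (m (ℓ, true)) (m (ℓ, false)) / 2

noncomputable def alphaMap (m : (ℕ × Bool) →₀ ℕ) : ℕ →₀ ℕ :=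
  Finsupp.onFinset (m.support.image Prod.fst) (alphaVal m)
    (fun ℓ h => Finset.mem_image.2
      ⟨(ℓ, true), Finsupp.mem_support_iff.2 fun h0 => h (by simp [alphaVal, h0]), rfl⟩)

/-- `μ(λ)`: multiplicities `m_λ(ℓ,ε) − 2·(multiplicity of ℓ in α(λ))`. -/
noncomputable def muMap (m : (ℕ × Bool) →₀ ℕ) : (ℕ × Bool) →₀ ℕ :=
  Finsupp.onFinset m.support
    (fun x => m x - 2 * alphaVal m x.1)
    (fun x h => Finsupp.mem_support_iff.2 fun h0 => h (by simp [h0]))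

noncomputable def lift (α : ℕ →₀ ℕ) : (ℕ × Bool) →₀ ℕ :=
  Finsupp.onFinset (α.support ×ˢ Finset.univ) (fun x => 2 * α x.1)
    (fun x h => Finset.mem_product.2
      ⟨Finsupp.mem_support_iff.2 fun h0 => h (by simp [h0]), Finset.mem_univ _⟩)

lemma lift_apply (α : ℕ →₀ ℕ) (x : ℕ × Bool) : lift α x = 2 * α x.1 := rfl

lemma alphaMap_apply (m : (ℕ × Bool) →₀ ℕ) (ℓ : ℕ) : alphaMap m ℓ = alphaVal m ℓ := rfl

lemma muMap_apply (m : (ℕ × Bool) →₀ ℕ) (x : ℕ × Bool) :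
    muMap m x = m x - 2 * alphaVal m x.1 := rfl

lemma sigPlus_add (f g : (ℕ × Bool) →₀ ℕ) : sigPlus (f + g) = sigPlus f + sigPlus g :=
  Finsupp.sum_add_index' (fun _ => zero_mul _) (fun _ b₁ b₂ => add_mul b₁ b₂ _)

lemma sigMinus_add (f g : (ℕ × Bool) →₀ ℕ) : sigMinus (f + g) = sigMinus f + sigMinus g :=
  Finsupp.sum_add_index' (fun _ => zero_mul _) (fun _ b₁ b₂ => add_mul b₁ b₂ _)

lemma rowPlus_add (ℓ : ℕ) : rowPlus ℓ true + rowPlus ℓ false = ℓ := by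
  simp [rowPlus]; omega

lemma sigPlus_lift (α : ℕ →₀ ℕ) : sigPlus (lift α) = 2 * psize α := by
  unfold sigPlus lift psize
  rw [Finsupp.onFinset_sum _ ?hg, Finset.sum_product, Finsupp.sum, Finset.mul_sum]
  case hg => exact fun _ => zero_mul _
  refine Finset.sum_congr rfl fun ℓ _ => ?_
  rw [Fintype.sum_bool]
  have h := rowPlus_add ℓ
  calc 2 * α ℓ * rowPlus ℓ true + 2 * α ℓ * rowPlus ℓ false
      = 2 * α ℓ * (rowPlus ℓ true + rowPlus ℓ false) := by ring
    _ = 2 * (ℓ * α ℓ) := by rw [h]; ring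

lemma sigMinus_lift (α : ℕ →₀ ℕ) : sigMinus (lift α) = 2 * psize α := by
  unfold sigMinus lift psize
  rw [Finsupp.onFinset_sum _ ?hg, Finset.sum_product, Finsupp.sum, Finset.mul_sum]
  case hg => exact fun _ => zero_mul _
  refine Finset.sum_congr rfl fun ℓ _ => ?_
  rw [Fintype.sum_bool]
  have h := rowPlus_add ℓ
  calc 2 * α ℓ * rowPlus ℓ (!true) + 2 * α ℓ * rowPlus ℓ (!false)
      = 2 * α ℓ * (rowPlus ℓ true + rowPlus ℓ false) := by simp; ring
    _ = 2 * (ℓ * α ℓ) := by rw [h]; ring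

lemma alphaVal_le (m : (ℕ × Bool) →₀ ℕ) (hodd : ∀ ℓ, Odd ℓ → m (ℓ, true) = m (ℓ, false))
    (ℓ : ℕ) (b : Bool) : 2 * alphaVal m ℓ ≤ m (ℓ, b) := by
  unfold alphaVal
  split_ifs with h
  · have := hodd ℓ h
    cases b <;> omega
  · cases b <;> omega

lemma decomp (m : (ℕ × Bool) →₀ ℕ) (hodd : ∀ ℓ, Odd ℓ → m (ℓ, true) = m (ℓ, false)) :
    muMap m + lift (alphaMap m) = m := by
  ext x
  obtain ⟨ℓ, b⟩ := x
  rw [Finsupp.add_apply, lift_apply, alphaMap_apply, muMap_apply]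
  dsimp only
  have := alphaVal_le m hodd ℓ b
  omega

lemma alphaVal_inv (α : ℕ →₀ ℕ) (μ : (ℕ × Bool) →₀ ℕ)
    (h1 : ∀ ℓ, Odd ℓ → μ (ℓ, true) ≤ 1)
    (h2 : ∀ ℓ, Even ℓ → min (μ (ℓ, true)) (μ (ℓ, false)) = 0) (ℓ : ℕ) :
    alphaVal (μ + lift α) ℓ = α ℓ := by
  unfold alphaVal
  rw [Finsupp.add_apply, Finsupp.add_apply, lift_apply, lift_apply]
  dsimp only
  split_ifs with h
  · have := h1 ℓ h
    omega
  · have := h2 ℓ (Nat.not_odd_iff_even.1 h)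
    omega

theorem stmt15 (n : ℕ) :
    Set.BijOn (fun m => (alphaMap m, muMap m))
      {m : (ℕ × Bool) →₀ ℕ |
        (∀ b, m (0, b) = 0) ∧
        (∀ ℓ, Odd ℓ → m (ℓ, true) = m (ℓ, false)) ∧
        (∀ ℓ, Even ℓ → Even (m (ℓ, true)) ∧ Even (m (ℓ, false))) ∧
        sigPlus m = n ∧ sigMinus m = n}
      {x : (ℕ →₀ ℕ) × ((ℕ × Bool) →₀ ℕ) |
        x.1 0 = 0 ∧ (∀ b, x.2 (0, b) = 0) ∧
        (∀ ℓ, Odd ℓ → x.2 (ℓ, true) = x.2 (ℓ, false) ∧ x.2 (ℓ, true) ≤ 1) ∧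
        (∀ ℓ, Even ℓ → (Even (x.2 (ℓ, true)) ∧ Even (x.2 (ℓ, false))) ∧
          min (x.2 (ℓ, true)) (x.2 (ℓ, false)) = 0) ∧
        sigPlus x.2 + 2 * psize x.1 = n ∧
        sigMinus x.2 + 2 * psize x.1 = n} := by
  constructor
  · -- MapsTo
    rintro m ⟨h0, hodd, heven, hp, hq⟩
    have hdec := decomp m hodd
    refine ⟨?_, ?_, ?_, ?_, ?_, ?_⟩
    · show alphaVal m 0 = 0
      unfold alphaVal
      have : ¬ Odd 0 := by decide
      rw [if_neg this, h0 true, h0 false]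
      simp
    · intro b
      show m (0, b) - 2 * alphaVal m (0, b).1 = 0
      rw [h0 b]; omega
    · intro ℓ hℓ
      have he := hodd ℓ hℓ
      have ha : alphaVal m ℓ = m (ℓ, true) / 2 := by unfold alphaVal; rw [if_pos hℓ]
      constructor
      · show m (ℓ, true) - 2 * alphaVal m (ℓ, true).1 = m (ℓ, false) - 2 * alphaVal m (ℓ, false).1
        dsimp only; rw [ha]; omega
      · show m (ℓ, true) - 2 * alphaVal m (ℓ, true).1 ≤ 1
        dsimp only; rw [ha]; omega
    · intro ℓ hℓ
      obtain ⟨e1, e2⟩ := heven ℓ hℓ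
      rw [Nat.even_iff] at e1 e2
      have ha : alphaVal m ℓ = min (m (ℓ, true)) (m (ℓ, false)) / 2 := by
        unfold alphaVal; rw [if_neg (Nat.not_odd_iff_even.2 hℓ)]
      refine ⟨⟨?_, ?_⟩, ?_⟩
      · show Even (m (ℓ, true) - 2 * alphaVal m (ℓ, true).1)
        dsimp only; rw [ha, Nat.even_iff]; omega
      · show Even (m (ℓ, false) - 2 * alphaVal m (ℓ, false).1)
        dsimp only; rw [ha, Nat.even_iff]; omega
      · show min (m (ℓ, true) - 2 * alphaVal m (ℓ, true).1)
            (m (ℓ, false) - 2 * alphaVal m (ℓ, false).1) = 0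
        dsimp only; rw [ha]; omega
    · show sigPlus (muMap m) + 2 * psize (alphaMap m) = n
      rw [← sigPlus_lift, ← sigPlus_add, hdec, hp]
    · show sigMinus (muMap m) + 2 * psize (alphaMap m) = n
      rw [← sigMinus_lift, ← sigMinus_add, hdec, hq]
  constructor
  · -- InjOn
    rintro m1 ⟨_, hodd1, _, _, _⟩ m2 ⟨_, hodd2, _, _, _⟩ heq
    have h1 := congrArg Prod.fst heq
    have h2 := congrArg Prod.snd heq
    simp only at h1 h2
    rw [← decomp m1 hodd1, ← decomp m2 hodd2, h1, h2]
  · -- SurjOn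
    rintro ⟨α, μ⟩ ⟨hα0, hμ0, hodd, heven, hp, hq⟩
    dsimp only at hα0 hμ0 hodd heven hp hq
    have hodd1 : ∀ ℓ, Odd ℓ → μ (ℓ, true) ≤ 1 := fun ℓ h => (hodd ℓ h).2
    have hmin : ∀ ℓ, Even ℓ → min (μ (ℓ, true)) (μ (ℓ, false)) = 0 :=
      fun ℓ h => (heven ℓ h).2
    set m : (ℕ × Bool) →₀ ℕ := μ + lift α with hm
    have happ : ∀ ℓ b, m (ℓ, b) = μ (ℓ, b) + 2 * α ℓ := by
      intro ℓ b; rw [hm, Finsupp.add_apply, lift_apply]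
    have hav : ∀ ℓ, alphaVal m ℓ = α ℓ := alphaVal_inv α μ hodd1 hmin
    refine ⟨m, ⟨?_, ?_, ?_, ?_, ?_⟩, ?_⟩
    · intro b; rw [happ, hμ0 b, hα0]
    · intro ℓ hℓ
      rw [happ, happ, (hodd ℓ hℓ).1]
    · intro ℓ hℓ
      obtain ⟨⟨e1, e2⟩, _⟩ := heven ℓ hℓ
      rw [Nat.even_iff] at e1 e2
      rw [happ, happ, Nat.even_iff, Nat.even_iff]
      omega
    · show sigPlus m = n
      rw [hm, sigPlus_add, sigPlus_lift, hp]
    · show sigMinus m = n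
      rw [hm, sigMinus_add, sigMinus_lift, hq]
    · show (alphaMap m, muMap m) = (α, μ)
      refine Prod.ext ?_ ?_ <;> dsimp only
      · ext ℓ; rw [alphaMap_apply, hav]
      · ext x
        obtain ⟨ℓ, b⟩ := x
        rw [muMap_apply]
        dsimp only
        rw [hav, happ]
        omega


end Stmt15
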